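/- Let γ be a metric on the finite set T, and define for each v ∈ T, φ̲_v = max_{u∈T}(φ̲⁰_u − γ(u,v)) and φ̄_v = min_{u∈T}(φ̄⁰_u + γ(v,u)). Then for any distinct u, v ∈ T, the two-dimensional projection of U_SB onto coordinates (v, u) equals the hexagonal polytope { (φ_v, φ_u) : φ̲_v ≤ φ_v ≤ φ̄_v, φ̲_u ≤ φ_u ≤ φ̄_u, |φ_v − φ_u| ≤ γ(v,u) }. -/

import Mathlib

/-- With γ a metric on finite T and tightened bounds
lov w = max_u (lo u − γ u w), hiv w = min_u (hi u + γ w u), the two-dimensional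
projection of the nonempty U_SB onto coordinates (v,u) equals the hexagon. -/
theorem stmt6 {T : Type*} [Fintype T] [Nonempty T]
    (lo hi : T → ℝ) (hlohi : ∀ u, lo u ≤ hi u)
    (γ : T → T → ℝ)
    (hγnn : ∀ u v, 0 ≤ γ u v)
    (hγ0 : ∀ u v, γ u v = 0 ↔ u = v)
    (hγsymm : ∀ u v, γ u v = γ v u)
    (hγtri : ∀ u v w, γ u w ≤ γ u v + γ v w)
    (hγle1 : ∀ u v, γ u v ≤ 1)
    (USB : Set (T → ℝ))
    (hUSB : USB = {φ : T → ℝ | (∀ w, lo w ≤ φ w ∧ φ w ≤ hi w) ∧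
        ∀ w w', |φ w - φ w'| ≤ γ w w'})
    (hne : USB.Nonempty)
    (lov hiv : T → ℝ)
    (hlov : ∀ w, lov w = Finset.univ.sup' Finset.univ_nonempty (fun u => lo u - γ u w))
    (hhiv : ∀ w, hiv w = Finset.univ.inf' Finset.univ_nonempty (fun u => hi u + γ w u))
    (v u : T) (hvu : u ≠ v) :
    (fun φ : T → ℝ => (φ v, φ u)) '' USB
      = {p : ℝ × ℝ | lov v ≤ p.1 ∧ p.1 ≤ hiv v ∧ lov u ≤ p.2 ∧ p.2 ≤ hiv u ∧
          |p.1 - p.2| ≤ γ v u} := by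
  obtain ⟨φ0, hφ0⟩ := hne
  subst hUSB
  obtain ⟨hφ0b, hφ0l⟩ := hφ0
  -- basic facts
  have hlole : ∀ w, lo w ≤ lov w := by
    intro w
    have h := Finset.le_sup' (fun x => lo x - γ x w) (Finset.mem_univ w)
    have : γ w w = 0 := (hγ0 w w).mpr rfl
    rw [hlov]
    simp only [this, sub_zero] at h
    exact h
  have hlovhi : ∀ w, lov w ≤ hi w := by
    intro w
    rw [hlov]
    apply Finset.sup'_le
    intro x _
    have h1 := (abs_sub_le_iff.mp (hφ0l x w)).1
    linarith [(hφ0b x).1, (hφ0b w).2]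
  have hhivle : ∀ w x, hiv w ≤ hi x + γ w x := by
    intro w x
    rw [hhiv]
    exact Finset.inf'_le (fun y => hi y + γ w y) (Finset.mem_univ x)
  have hlovlip : ∀ w w', lov w - lov w' ≤ γ w w' := by
    intro w w'
    rw [hlov, hlov, sub_le_iff_le_add]
    apply Finset.sup'_le
    intro x _
    have h := hγtri x w w'
    have h2 := Finset.le_sup' (fun y => lo y - γ y w') (Finset.mem_univ x)
    have hs := hγsymm w w'
    linarith
  ext p
  obtain ⟨a, b⟩ := p
  simp only [Set.mem_image, Set.mem_setOf_eq]
  constructor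
  · rintro ⟨φ, ⟨hb, hlip⟩, hp⟩
    have ha : φ v = a := congrArg Prod.fst hp
    have hbb : φ u = b := congrArg Prod.snd hp
    subst ha; subst hbb
    refine ⟨?_, ?_, ?_, ?_, hlip v u⟩
    · rw [hlov]; apply Finset.sup'_le
      intro w _
      have h := (abs_sub_le_iff.mp (hlip w v)).1
      linarith [(hb w).1]
    · rw [hhiv]; apply Finset.le_inf'
      intro w _
      have h := (abs_sub_le_iff.mp (hlip v w)).1
      linarith [(hb w).2]
    · rw [hlov]; apply Finset.sup'_le
      intro w _
      have h := (abs_sub_le_iff.mp (hlip w u)).1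
      linarith [(hb w).1]
    · rw [hhiv]; apply Finset.le_inf'
      intro w _
      have h := (abs_sub_le_iff.mp (hlip u w)).1
      linarith [(hb w).2]
  · rintro ⟨h1, h2, h3, h4, h5⟩
    obtain ⟨h5a, h5b⟩ := abs_sub_le_iff.mp h5
    refine ⟨fun w => max (a - γ v w) (max (b - γ u w) (lov w)), ⟨?_, ?_⟩, ?_⟩
    · intro w
      constructor
      · exact le_trans (hlole w) (le_trans (le_max_right _ _) (le_max_right _ _))
      · apply max_le
        · have := hhivle v w
          linarith
        · apply max_le
          · have := hhivle u w
            linarith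
          · exact hlovhi w
    · intro w w'
      have key : ∀ x : T, |γ x w' - γ x w| ≤ γ w w' := by
        intro x
        rw [abs_sub_le_iff]
        constructor
        · have := hγtri x w w'
          linarith
        · have := hγtri x w' w
          have := hγsymm w' w
          linarith
      calc |max (a - γ v w) (max (b - γ u w) (lov w)) -
              max (a - γ v w') (max (b - γ u w') (lov w'))|
          ≤ max |(a - γ v w) - (a - γ v w')|
              |max (b - γ u w) (lov w) - max (b - γ u w') (lov w')| :=
            abs_max_sub_max_le_max _ _ _ _
        _ ≤ γ w w' := by
            apply max_le
            · have := key v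
              have h' : a - γ v w - (a - γ v w') = γ v w' - γ v w := by ring
              rw [h']
              exact this
            · refine le_trans (abs_max_sub_max_le_max _ _ _ _) (max_le ?_ ?_)
              · have := key u
                have h' : b - γ u w - (b - γ u w') = γ u w' - γ u w := by ring
                rw [h']
                exact this
              · rw [abs_sub_le_iff]
                refine ⟨hlovlip w w', ?_⟩
                have := hlovlip w' w
                have := hγsymm w' w
                linarith
    · have hvv : γ v v = 0 := (hγ0 v v).mpr rfl
      have huu : γ u u = 0 := (hγ0 u u).mpr rfl
      have hsym := hγsymm u v
      have hfv : max (a - γ v v) (max (b - γ u v) (lov v)) = a := by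
        rw [hvv]
        rw [max_eq_left]
        · ring
        · apply max_le <;> [skip; linarith]
          linarith
      have hfu : max (a - γ v u) (max (b - γ u u) (lov u)) = b := by
        rw [huu]
        have h1' : b - 0 = b := by ring
        rw [h1']
        rw [max_eq_right]
        · exact max_eq_left h3
        · rw [max_eq_left h3]
          linarith
      simp only [hfv, hfu]
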